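/- Let $M \in \mathbb{N}$, $A > 0$, and let $(E_k)_{k \ge 1}$ be a sequence of nonempty closed sets $E_k \subseteq [-A, A]$ that is $M$-periodic, i.e., $E_{k+M} = E_k$ for all $k \ge 1$. Suppose that $\sum_{k=1}^M \max E_k \le 0$ or $\sum_{k=1}^M \min E_k \ge 0$. Then for every $n \in \mathbb{N}$ and every choice of $\varepsilon_k \in E_k$, the polynomial $P_n(x) = 1 + \sum_{k=1}^n \varepsilon_k x^k$ has at most $3M$ distinct roots in $[0,1]$. -/

import Mathlib

namespace PeriodicObstructionAux

open Polynomial Finset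

inductive Good : Polynomial ℝ → ℕ → Prop where
  | nonneg (f : Polynomial ℝ) (h : ∀ k, 0 ≤ f.coeff k) : Good f 0
  | nonpos (f : Polynomial ℝ) (h : ∀ k, f.coeff k ≤ 0) : Good f 0
  | addLow (f : Polynomial ℝ) (V : ℕ) (a : ℝ) (d : ℕ)
      (hf : ∀ k, k ≤ d → f.coeff k = 0) (hg : Good f V) :
      Good (f + C a * X ^ d) (V + 1)
  | addHigh (f : Polynomial ℝ) (V : ℕ) (a : ℝ) (d : ℕ)
      (hf : ∀ k, d ≤ k → f.coeff k = 0) (hg : Good f V) :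
      Good (f + C a * X ^ d) (V + 1)

lemma coeff_T (f : Polynomial ℝ) (c : ℝ) (k : ℕ) :
    (X * derivative f - C c * f).coeff k = ((k : ℝ) - c) * f.coeff k := by
  rw [coeff_sub, coeff_C_mul]
  cases k with
  | zero =>
    rw [mul_coeff_zero, coeff_X_zero]
    push_cast; ring
  | succ m =>
    rw [coeff_X_mul, coeff_derivative]
    push_cast; ring

lemma coeff_add_monomial (f : Polynomial ℝ) (a : ℝ) (d k : ℕ) :
    (f + C a * X ^ d).coeff k = f.coeff k + a * (if k = d then 1 else 0) := by
  rw [coeff_add, coeff_C_mul, coeff_X_pow]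

lemma sub_coeff_zero {f : Polynomial ℝ} {a : ℝ} {d d' : ℕ}
    (hlow : (f + C a * X ^ d').coeff d = 0) (hd' : f.coeff d' = 0) :
    f.coeff d = 0 := by
  rcases eq_or_ne d d' with rfl | h
  · exact hd'
  · rw [coeff_add_monomial, if_neg h, mul_zero, add_zero] at hlow
    exact hlow

lemma T_add_monomial (f : Polynomial ℝ) (a : ℝ) (d' : ℕ) (c : ℝ) :
    X * derivative (f + C a * X ^ d') - C c * (f + C a * X ^ d')
      = (X * derivative f - C c * f) + C (a * ((d' : ℝ) - c)) * X ^ d' := by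
  ext k
  rw [coeff_T, coeff_add_monomial, coeff_add_monomial, coeff_T]
  split_ifs with h
  · subst h; ring
  · ring

lemma good_T_of_le {f : Polynomial ℝ} {V : ℕ} (hg : Good f V) :
    ∀ d : ℕ, (∀ k, k < d → f.coeff k = 0) →
      Good (X * derivative f - C (d : ℝ) * f) V := by
  induction hg with
  | nonneg f h =>
    intro d hd
    apply Good.nonneg
    intro k
    rw [coeff_T]
    rcases eq_or_ne (f.coeff k) 0 with h0 | h0
    · simp [h0]
    · have hk : d ≤ k := by by_contra hk; exact h0 (hd k (by omega))
      have : (0:ℝ) ≤ (k : ℝ) - d := by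
        rw [sub_nonneg]; exact_mod_cast hk
      exact mul_nonneg this (h k)
  | nonpos f h =>
    intro d hd
    apply Good.nonpos
    intro k
    rw [coeff_T]
    rcases eq_or_ne (f.coeff k) 0 with h0 | h0
    · simp [h0]
    · have hk : d ≤ k := by by_contra hk; exact h0 (hd k (by omega))
      have : (0:ℝ) ≤ (k : ℝ) - d := by
        rw [sub_nonneg]; exact_mod_cast hk
      nlinarith [h k]
  | addLow f V a d' hf hg ih =>
    intro d hd
    have hfd : ∀ k, k < d → f.coeff k = 0 := fun k hk =>
      sub_coeff_zero (hd k hk) (hf d' le_rfl)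
    rw [T_add_monomial]
    exact Good.addLow _ _ _ _ (fun k hk => by rw [coeff_T, hf k hk, mul_zero]) (ih d hfd)
  | addHigh f V a d' hf hg ih =>
    intro d hd
    have hfd : ∀ k, k < d → f.coeff k = 0 := fun k hk =>
      sub_coeff_zero (hd k hk) (hf d' le_rfl)
    rw [T_add_monomial]
    exact Good.addHigh _ _ _ _ (fun k hk => by rw [coeff_T, hf k hk, mul_zero]) (ih d hfd)

lemma good_T_of_ge {f : Polynomial ℝ} {V : ℕ} (hg : Good f V) :
    ∀ d : ℕ, (∀ k, d < k → f.coeff k = 0) →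
      Good (X * derivative f - C (d : ℝ) * f) V := by
  induction hg with
  | nonneg f h =>
    intro d hd
    apply Good.nonpos
    intro k
    rw [coeff_T]
    rcases eq_or_ne (f.coeff k) 0 with h0 | h0
    · simp [h0]
    · have hk : k ≤ d := by by_contra hk; exact h0 (hd k (by omega))
      have : (k : ℝ) - d ≤ 0 := by
        rw [sub_nonpos]; exact_mod_cast hk
      nlinarith [h k]
  | nonpos f h =>
    intro d hd
    apply Good.nonneg
    intro k
    rw [coeff_T]
    rcases eq_or_ne (f.coeff k) 0 with h0 | h0
    · simp [h0]
    · have hk : k ≤ d := by by_contra hk; exact h0 (hd k (by omega))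
      have h1 : (k : ℝ) - d ≤ 0 := by
        rw [sub_nonpos]; exact_mod_cast hk
      nlinarith [h k]
  | addLow f V a d' hf hg ih =>
    intro d hd
    have hfd : ∀ k, d < k → f.coeff k = 0 := fun k hk =>
      sub_coeff_zero (hd k hk) (hf d' le_rfl)
    rw [T_add_monomial]
    exact Good.addLow _ _ _ _ (fun k hk => by rw [coeff_T, hf k hk, mul_zero]) (ih d hfd)
  | addHigh f V a d' hf hg ih =>
    intro d hd
    have hfd : ∀ k, d < k → f.coeff k = 0 := fun k hk =>
      sub_coeff_zero (hd k hk) (hf d' le_rfl)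
    rw [T_add_monomial]
    exact Good.addHigh _ _ _ _ (fun k hk => by rw [coeff_T, hf k hk, mul_zero]) (ih d hfd)


open Polynomial Finset

lemma eval_pos_of_nonneg (f : Polynomial ℝ) (h : ∀ k, 0 ≤ f.coeff k) (hf : f ≠ 0)
    {x : ℝ} (hx : 0 < x) : 0 < Polynomial.eval x f := by
  rw [Polynomial.eval_eq_sum_range]
  apply Finset.sum_pos'
  · intro i _
    exact mul_nonneg (h i) (pow_pos hx i).le
  · refine ⟨f.natDegree, Finset.self_mem_range_succ _, ?_⟩
    have hlc : f.coeff f.natDegree ≠ 0 := by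
      rw [← Polynomial.leadingCoeff]
      exact Polynomial.leadingCoeff_ne_zero.mpr hf
    exact mul_pos ((h _).lt_of_ne' hlc) (pow_pos hx _)

lemma rolle_finset (φ ψ : ℝ → ℝ) (hd : ∀ x : ℝ, 0 < x → HasDerivAt φ (ψ x) x) :
    ∀ (s : Finset ℝ), (∀ x ∈ s, 0 < x ∧ φ x = 0) →
      ∃ t : Finset ℝ, (∀ y ∈ t, 0 < y ∧ ψ y = 0) ∧ (∀ y ∈ t, ∃ x ∈ s, x < y) ∧
        s.card ≤ t.card + 1 := by
  suffices H : ∀ (N : ℕ) (s : Finset ℝ), s.card = N → (∀ x ∈ s, 0 < x ∧ φ x = 0) →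
      ∃ t : Finset ℝ, (∀ y ∈ t, 0 < y ∧ ψ y = 0) ∧ (∀ y ∈ t, ∃ x ∈ s, x < y) ∧
        s.card ≤ t.card + 1 by
    intro s hs; exact H s.card s rfl hs
  intro N
  induction N with
  | zero =>
    intro s hcard _
    exact ⟨∅, by simp, by simp, by omega⟩
  | succ N ih =>
    intro s hcard hs
    rcases Nat.eq_zero_or_pos N with rfl | hN
    · exact ⟨∅, by simp, by simp, by omega⟩
    have hsne : s.Nonempty := Finset.card_pos.mp (by omega)
    set a := s.min' hsne with ha
    have has : a ∈ s := s.min'_mem hsne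
    set s' := s.erase a with hs'
    have hcard' : s'.card = N := by
      rw [hs', Finset.card_erase_of_mem has, hcard]; omega
    have hs'ne : s'.Nonempty := Finset.card_pos.mp (by omega)
    obtain ⟨t', ht'1, ht'2, ht'3⟩ := ih s' hcard' (fun x hx => hs x (Finset.mem_of_mem_erase hx))
    set b := s'.min' hs'ne with hb
    have hbs' : b ∈ s' := s'.min'_mem hs'ne
    have hbs : b ∈ s := Finset.mem_of_mem_erase hbs'
    have hab : a < b := by
      have h1 : a ≤ b := s.min'_le b hbs
      have h2 : b ≠ a := (Finset.mem_erase.mp hbs').1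
      exact lt_of_le_of_ne h1 (Ne.symm h2)
    have ha0 : 0 < a := (hs a has).1
    have hcont : ContinuousOn φ (Set.Icc a b) := fun x hx =>
      (hd x (lt_of_lt_of_le ha0 hx.1)).continuousAt.continuousWithinAt
    obtain ⟨c, hc, hψc⟩ := exists_hasDerivAt_eq_zero hab hcont
      ((hs a has).2.trans (hs b hbs).2.symm)
      (fun x hx => hd x (lt_trans ha0 hx.1))
    have hct' : c ∉ t' := by
      intro hmem
      obtain ⟨x, hx, hxc⟩ := ht'2 c hmem
      have : b ≤ x := s'.min'_le x hx
      have : b ≤ x := this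
      linarith [hc.2]
    refine ⟨insert c t', ?_, ?_, ?_⟩
    · intro y hy
      rcases Finset.mem_insert.mp hy with rfl | hy'
      · exact ⟨lt_trans ha0 hc.1, hψc⟩
      · exact ht'1 y hy'
    · intro y hy
      rcases Finset.mem_insert.mp hy with rfl | hy'
      · exact ⟨a, has, hc.1⟩
      · obtain ⟨x, hx, hxy⟩ := ht'2 y hy'
        exact ⟨x, Finset.mem_of_mem_erase hx, hxy⟩
    · rw [Finset.card_insert_of_notMem hct']
      omega


lemma hderiv (g : Polynomial ℝ) (d : ℕ) {x : ℝ} (hx : 0 < x) :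
    HasDerivAt (fun y : ℝ => Polynomial.eval y g * y ^ (-(d:ℤ)))
      (Polynomial.eval x (X * derivative g - C (d:ℝ) * g) * x ^ (-(d:ℤ) - 1)) x := by
  have hxne : x ≠ 0 := hx.ne'
  have h1 := (g.hasDerivAt x).mul (hasDerivAt_zpow (-(d:ℤ)) x (Or.inl hxne))
  convert h1 using 1
  · rfl
  · rfl
  · rfl
  have hz : x ^ (-(d:ℤ)) = x ^ (-(d:ℤ) - 1) * x := by
    rw [← zpow_add_one₀ hxne]
    norm_num
  rw [hz]
  simp only [eval_sub, eval_mul, eval_X, eval_C, zpow_one]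
  push_cast
  ring
lemma count_step (f : Polynomial ℝ) (a : ℝ) (d V : ℕ)
    (hTf : Good (X * derivative f - C (d:ℝ) * f) V)
    (ih : ∀ g : Polynomial ℝ, Good g V → g ≠ 0 → ∀ s : Finset ℝ,
      (∀ x ∈ s, 0 < x ∧ Polynomial.eval x g = 0) → s.card ≤ V)
    (hne : f + C a * X ^ d ≠ 0)
    (s : Finset ℝ) (hs : ∀ x ∈ s, 0 < x ∧ Polynomial.eval x (f + C a * X ^ d) = 0) :
    s.card ≤ V + 1 := by
  set g : Polynomial ℝ := f + C a * X ^ d with hgdef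
  set h : Polynomial ℝ := X * derivative g - C (d:ℝ) * g with hhdef
  have hT : h = X * derivative f - C (d:ℝ) * f := by
    rw [hhdef, hgdef, T_add_monomial]
    simp
  have hGoodh : Good h V := by rw [hT]; exact hTf
  set φ : ℝ → ℝ := fun y => Polynomial.eval y g * y ^ (-(d:ℤ)) with hφdef
  set ψ : ℝ → ℝ := fun y => Polynomial.eval y h * y ^ (-(d:ℤ) - 1) with hψdef
  have hanal : ∀ x : ℝ, 0 < x → HasDerivAt φ (ψ x) x := fun x hx => hderiv g d hx
  by_cases hh : h = 0
  · rcases s.eq_empty_or_nonempty with rfl | ⟨x₀, hx₀⟩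
    · simp
    exfalso
    have hψ0 : ∀ x : ℝ, 0 < x → ψ x = 0 := by
      intro x hx; rw [hψdef]; simp [hh]
    have hconst : ∀ u v : ℝ, 0 < u → u < v → φ u = φ v := by
      intro u v hu huv
      have hcont : ContinuousOn φ (Set.Icc u v) := fun x hx =>
        (hanal x (lt_of_lt_of_le hu hx.1)).continuousAt.continuousWithinAt
      obtain ⟨c, hc, hceq⟩ := exists_hasDerivAt_eq_slope φ ψ huv hcont
        (fun x hx => hanal x (lt_trans hu hx.1))
      rw [hψ0 c (lt_trans hu hc.1)] at hceq
      have hvu : v - u ≠ 0 := by linarith [huv]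
      field_simp at hceq
      linarith [hceq]
    have hφx₀ : φ x₀ = 0 := by
      rw [hφdef]; simp [(hs x₀ hx₀).2]
    have hroot : ∀ y : ℝ, 0 < y → Polynomial.eval y g = 0 := by
      intro y hy
      have hφy : φ y = 0 := by
        rcases lt_trichotomy y x₀ with hlt | heq | hgt
        · rw [hconst y x₀ hy hlt]; exact hφx₀
        · rw [heq]; exact hφx₀
        · rw [← hconst x₀ y (hs x₀ hx₀).1 hgt]; exact hφx₀
      have := hφy
      rw [hφdef] at this
      simp only at this
      rcases mul_eq_zero.mp this with h' | h'
      · exact h'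
      · exact absurd h' (zpow_ne_zero _ hy.ne')
    have : g = 0 := by
      apply Polynomial.eq_zero_of_infinite_isRoot
      apply Set.Infinite.mono _ (Set.Ioi_infinite (0:ℝ))
      intro y hy
      exact hroot y hy
    exact hne this
  · obtain ⟨t, ht1, _, ht3⟩ := rolle_finset φ ψ hanal s
      (fun x hx => ⟨(hs x hx).1, by rw [hφdef]; simp [(hs x hx).2]⟩)
    have htcard : t.card ≤ V := by
      apply ih h hGoodh hh t
      intro y hy
      refine ⟨(ht1 y hy).1, ?_⟩
      have := (ht1 y hy).2
      rw [hψdef] at this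
      simp only at this
      rcases mul_eq_zero.mp this with h' | h'
      · exact h'
      · exact absurd h' (zpow_ne_zero _ (ht1 y hy).1.ne')
    omega


theorem good_count : ∀ (V : ℕ) (f : Polynomial ℝ), Good f V → f ≠ 0 →
    ∀ s : Finset ℝ, (∀ x ∈ s, 0 < x ∧ Polynomial.eval x f = 0) → s.card ≤ V := by
  intro V
  induction V with
  | zero =>
    intro f hg hf s hs
    cases hg with
    | nonneg f h =>
      rcases s.eq_empty_or_nonempty with rfl | ⟨x, hx⟩
      · simp
      exact ((eval_pos_of_nonneg f h hf (hs x hx).1).ne' (hs x hx).2).elim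
    | nonpos f h =>
      rcases s.eq_empty_or_nonempty with rfl | ⟨x, hx⟩
      · simp
      have h1 : ∀ k, 0 ≤ (-f).coeff k := fun k => by simp [h k]
      have h2 : (-f) ≠ 0 := neg_ne_zero.mpr hf
      have h3 : Polynomial.eval x (-f) = 0 := by simp [(hs x hx).2]
      exact ((eval_pos_of_nonneg (-f) h1 h2 (hs x hx).1).ne' h3).elim
  | succ V ih =>
    intro f hg hf s hs
    cases hg with
    | addLow f V a d hfd hg =>
      exact count_step f a d V (good_T_of_le hg d (fun k hk => hfd k hk.le)) ih hf s hs
    | addHigh f V a d hfd hg =>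
      exact count_step f a d V (good_T_of_ge hg d (fun k hk => hfd k hk.le)) ih hf s hs


lemma coeff_sum_mono (s : Finset ℕ) (b : ℕ → ℝ) (k : ℕ) :
    (∑ j ∈ s, C (b j) * X ^ j).coeff k = if k ∈ s then b k else 0 := by
  rw [finset_sum_coeff]
  simp only [coeff_C_mul, coeff_X_pow, mul_ite, mul_one, mul_zero]
  exact Finset.sum_ite_eq s k b

lemma coeff_shift_sum (m D : ℕ) (b : ℕ → ℝ) (k : ℕ) :
    (∑ j ∈ Finset.range m, C (b j) * X ^ (D + j)).coeff k
      = if D ≤ k ∧ k < D + m then b (k - D) else 0 := by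
  rw [finset_sum_coeff]
  simp only [coeff_C_mul, coeff_X_pow, mul_ite, mul_one, mul_zero]
  split_ifs with hk
  · rw [Finset.sum_eq_single (k - D)]
    · rw [if_pos (by omega)]
    · intro j hj hne
      rw [if_neg (by omega)]
    · intro h
      exact absurd (Finset.mem_range.mpr (by omega)) h
  · apply Finset.sum_eq_zero
    intro j hj
    have hj' := Finset.mem_range.mp hj
    rw [if_neg (by intro h; exact hk ⟨by omega, by omega⟩)]

lemma window_sum (M : ℕ) (hM : 0 < M) (φ : ℕ → ℝ) (hφ : ∀ k, 1 ≤ k → φ (k + M) = φ k) :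
    ∀ j, M ≤ j → ∑ i ∈ Finset.range M, φ (j - i) = ∑ k ∈ Finset.Icc 1 M, φ k := by
  intro j
  induction j with
  | zero => intro h; omega
  | succ j ihj =>
    intro hj
    rcases eq_or_lt_of_le hj with heq | hlt
    · rw [← heq]
      have hIcc : ∑ k ∈ Finset.Icc 1 M, φ k = ∑ i ∈ Finset.range M, φ (1 + i) := by
        rw [← Finset.Ico_add_one_right_eq_Icc, Finset.sum_Ico_eq_sum_range]
        simp
      rw [hIcc, ← Finset.sum_range_reflect (fun i => φ (1 + i)) M]
      apply Finset.sum_congr rfl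
      intro i hi
      have hi' := Finset.mem_range.mp hi
      congr 1
      omega
    · have hMj : M ≤ j := by omega
      obtain ⟨m, rfl⟩ : ∃ m, M = m + 1 := ⟨M - 1, by omega⟩
      rw [Finset.sum_range_succ', ← ihj hMj, Finset.sum_range_succ]
      have h1 : ∀ i : ℕ, i < m → j + 1 - (i + 1) = j - i := fun i _ => by omega
      rw [Finset.sum_congr rfl (fun i hi => by rw [h1 i (Finset.mem_range.mp hi)])]
      congr 1
      rw [show j + 1 - 0 = (j - m) + (m + 1) from by omega]
      exact hφ (j - m) (by omega)

lemma buildLow (m : ℕ) : ∀ (f : Polynomial ℝ) (V : ℕ) (b : ℕ → ℝ),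
    Good f V → (∀ k, k < m → f.coeff k = 0) →
    Good (f + ∑ j ∈ Finset.range m, C (b j) * X ^ j) (V + m) := by
  induction m with
  | zero => intro f V b hg _; simpa using hg
  | succ m ih =>
    intro f V b hg hf
    have h1 : Good (f + C (b m) * X ^ m) (V + 1) :=
      Good.addLow f V (b m) m (fun k hk => hf k (by omega)) hg
    have h2 := ih (f + C (b m) * X ^ m) (V + 1) b h1 (fun k hk => by
      rw [coeff_add_monomial, hf k (by omega), if_neg (by omega), mul_zero, add_zero])
    have heq : (f + C (b m) * X ^ m) + ∑ j ∈ Finset.range m, C (b j) * X ^ j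
        = f + ∑ j ∈ Finset.range (m + 1), C (b j) * X ^ j := by
      rw [Finset.sum_range_succ]; ring
    rw [show V + (m + 1) = V + 1 + m from by omega, ← heq]
    exact h2

lemma buildHigh (m : ℕ) : ∀ (D : ℕ) (f : Polynomial ℝ) (V : ℕ) (b : ℕ → ℝ),
    Good f V → (∀ k, D ≤ k → f.coeff k = 0) →
    Good (f + ∑ j ∈ Finset.range m, C (b j) * X ^ (D + j)) (V + m) := by
  induction m with
  | zero => intro D f V b hg _; simpa using hg
  | succ m ih =>
    intro D f V b hg hf
    have h1 : Good (f + C (b 0) * X ^ D) (V + 1) :=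
      Good.addHigh f V (b 0) D hf hg
    have h2 := ih (D + 1) (f + C (b 0) * X ^ D) (V + 1) (fun j => b (j + 1)) h1
      (fun k hk => by
        rw [coeff_add_monomial, hf k (by omega), if_neg (by omega), mul_zero, add_zero])
    have heq : (f + C (b 0) * X ^ D) + ∑ j ∈ Finset.range m, C (b (j + 1)) * X ^ (D + 1 + j)
        = f + ∑ j ∈ Finset.range (m + 1), C (b j) * X ^ (D + j) := by
      rw [Finset.sum_range_succ']
      have hexp : ∀ j : ℕ, D + 1 + j = D + (j + 1) := fun j => by omega
      simp_rw [hexp]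
      ring
    rw [show V + (m + 1) = V + 1 + m from by omega, ← heq]
    exact h2

end PeriodicObstructionAux

open Polynomial Finset PeriodicObstructionAux in
/-- If `(E k)` is an `M`-periodic sequence of nonempty closed sets `E k ⊆ [-A, A]`
with `∑_{k=1}^M max E_k ≤ 0` or `∑_{k=1}^M min E_k ≥ 0`, then every polynomial
`P_n(x) = 1 + ∑_{k=1}^n ε_k x^k` with `ε_k ∈ E_k` has at most `3M` distinct
roots in `[0, 1]`. -/
theorem periodic_obstruction
    (M : ℕ) (hM : 0 < M) (A : ℝ) (hA : 0 < A)
    (E : ℕ → Set ℝ)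
    (hne : ∀ k, 1 ≤ k → (E k).Nonempty)
    (hclosed : ∀ k, 1 ≤ k → IsClosed (E k))
    (hsub : ∀ k, 1 ≤ k → E k ⊆ Set.Icc (-A) A)
    (hper : ∀ k, 1 ≤ k → E (k + M) = E k)
    (hdeg : (∑ k ∈ Finset.Icc 1 M, sSup (E k)) ≤ 0 ∨
            0 ≤ ∑ k ∈ Finset.Icc 1 M, sInf (E k)) :
    ∀ n : ℕ, ∀ ε : ℕ → ℝ, (∀ k, 1 ≤ k → k ≤ n → ε k ∈ E k) →
      ∀ roots : Finset ℝ, ↑roots ⊆ Set.Icc (0 : ℝ) 1 →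
        (∀ x ∈ roots, 1 + ∑ k ∈ Finset.Icc 1 n, ε k * x ^ k = 0) →
        roots.card ≤ 3 * M := by
  intro n ε hε roots hroots01 hrootseq
  classical
  set c : ℕ → ℝ := fun k => if k = 0 then 1 else if k ≤ n then ε k else 0 with hc
  set P : Polynomial ℝ := ∑ k ∈ Finset.range (n + 1), C (c k) * X ^ k with hP
  set G : Polynomial ℝ := ∑ i ∈ Finset.range M, P * X ^ i with hG
  have hPcoeff : ∀ j, P.coeff j = if j ≤ n then c j else 0 := by
    intro j
    rw [hP, finset_sum_coeff]
    simp only [coeff_C_mul, coeff_X_pow, mul_ite, mul_one, mul_zero]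
    rw [Finset.sum_ite_eq (Finset.range (n + 1)) j c]
    simp [Nat.lt_succ_iff]
  have hGcoeff : ∀ j, G.coeff j
      = ∑ i ∈ Finset.range M, if i ≤ j then P.coeff (j - i) else 0 := by
    intro j
    rw [hG, finset_sum_coeff]
    exact Finset.sum_congr rfl (fun i _ => coeff_mul_X_pow' P i j)
  have hGzero : ∀ k, n + M ≤ k → G.coeff k = 0 := by
    intro k hk
    rw [hGcoeff]
    apply Finset.sum_eq_zero
    intro i hi
    have hi' := Finset.mem_range.mp hi
    split_ifs with h
    · rw [hPcoeff, if_neg (by omega)]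
    · rfl
  have hG0 : G.coeff 0 = 1 := by
    rw [hGcoeff]
    rw [Finset.sum_eq_single_of_mem 0 (Finset.mem_range.mpr hM)]
    · rw [if_pos (le_refl 0), hPcoeff, if_pos (by omega)]
      simp [hc]
    · intro i _ hi
      rw [if_neg (by omega)]
  have hGne : G ≠ 0 := by
    intro h; rw [h] at hG0; simp at hG0
  have hroots' : ∀ x ∈ roots, 0 < x ∧ Polynomial.eval x G = 0 := by
    intro x hx
    have hxI := hroots01 hx
    have heq := hrootseq x hx
    have hx0 : x ≠ 0 := by
      rintro rfl
      have hzero : ∑ k ∈ Finset.Icc 1 n, ε k * (0 : ℝ) ^ k = 0 :=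
        Finset.sum_eq_zero (fun k hk => by
          rw [zero_pow (by have := (Finset.mem_Icc.mp hk).1; omega), mul_zero])
      rw [hzero] at heq
      norm_num at heq
    have hxpos : 0 < x := lt_of_le_of_ne hxI.1 (Ne.symm hx0)
    refine ⟨hxpos, ?_⟩
    have hPx : Polynomial.eval x P = 0 := by
      rw [hP, eval_finset_sum]
      simp only [eval_mul, eval_C, eval_pow, eval_X]
      have hins : Finset.range (n + 1) = insert 0 (Finset.Icc 1 n) := by
        ext k; simp [Finset.mem_range, Finset.mem_Icc]; omega
      rw [hins, Finset.sum_insert (by simp)]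
      have hcongr : ∑ k ∈ Finset.Icc 1 n, c k * x ^ k
          = ∑ k ∈ Finset.Icc 1 n, ε k * x ^ k := by
        apply Finset.sum_congr rfl
        intro k hk
        have hk' := Finset.mem_Icc.mp hk
        simp only [hc]
        rw [if_neg (by omega), if_pos hk'.2]
      rw [hcongr]
      simp only [hc]
      simpa using heq
    rw [hG, eval_finset_sum]
    simp [eval_mul, hPx]
  have hmid_rep : ∀ j, M ≤ j → j ≤ n →
      G.coeff j = ∑ i ∈ Finset.range M, ε (j - i) := by
    intro j h1 h2
    rw [hGcoeff]
    apply Finset.sum_congr rfl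
    intro i hi
    have hi' := Finset.mem_range.mp hi
    rw [if_pos (by omega), hPcoeff, if_pos (by omega)]
    simp only [hc]
    rw [if_neg (by omega), if_pos (by omega)]
  rcases le_or_gt M n with hMn | hnM
  · -- main case M ≤ n
    have hgood0 : Good (∑ j ∈ Finset.Icc M n, C (G.coeff j) * X ^ j) 0 := by
      rcases hdeg with hdeg | hdeg
      · apply Good.nonpos
        intro k
        rw [coeff_sum_mono]
        split_ifs with hk
        · have hk' := Finset.mem_Icc.mp hk
          rw [hmid_rep k hk'.1 hk'.2]
          calc ∑ i ∈ Finset.range M, ε (k - i)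
              ≤ ∑ i ∈ Finset.range M, sSup (E (k - i)) := by
                apply Finset.sum_le_sum
                intro i hi
                have hi' := Finset.mem_range.mp hi
                have h1 : 1 ≤ k - i := by omega
                have h2 : k - i ≤ n := by omega
                exact le_csSup ⟨A, fun y hy => (hsub _ h1 hy).2⟩ (hε _ h1 h2)
            _ = ∑ j ∈ Finset.Icc 1 M, sSup (E j) :=
                window_sum M hM (fun j => sSup (E j))
                  (fun j hj => by show sSup (E (j + M)) = sSup (E j); rw [hper j hj]) k hk'.1
            _ ≤ 0 := hdeg
        · exact le_refl 0
      · apply Good.nonneg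
        intro k
        rw [coeff_sum_mono]
        split_ifs with hk
        · have hk' := Finset.mem_Icc.mp hk
          rw [hmid_rep k hk'.1 hk'.2]
          calc (0:ℝ) ≤ ∑ j ∈ Finset.Icc 1 M, sInf (E j) := hdeg
            _ = ∑ i ∈ Finset.range M, sInf (E (k - i)) :=
                (window_sum M hM (fun j => sInf (E j))
                  (fun j hj => by show sInf (E (j + M)) = sInf (E j); rw [hper j hj]) k hk'.1).symm
            _ ≤ ∑ i ∈ Finset.range M, ε (k - i) := by
                apply Finset.sum_le_sum
                intro i hi
                have hi' := Finset.mem_range.mp hi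
                have h1 : 1 ≤ k - i := by omega
                have h2 : k - i ≤ n := by omega
                exact csInf_le ⟨-A, fun y hy => (hsub _ h1 hy).1⟩ (hε _ h1 h2)
        · exact le_refl 0
    have hgood1 := buildLow M _ 0 (fun j => G.coeff j) hgood0 (fun k hk => by
      rw [coeff_sum_mono, if_neg (by simp only [Finset.mem_Icc]; omega)])
    have hgood2 := buildHigh (M - 1) (n + 1) _ (0 + M) (fun j => G.coeff (n + 1 + j)) hgood1
      (fun k hk => by
        rw [coeff_add, coeff_sum_mono, coeff_sum_mono,
          if_neg (by simp only [Finset.mem_Icc]; omega),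
          if_neg (by simp only [Finset.mem_range]; omega)]
        norm_num)
    have hGeq : ((∑ j ∈ Finset.Icc M n, C (G.coeff j) * X ^ j)
          + ∑ j ∈ Finset.range M, C ((fun j => G.coeff j) j) * X ^ j)
          + ∑ j ∈ Finset.range (M - 1), C ((fun j => G.coeff (n + 1 + j)) j) * X ^ (n + 1 + j)
        = G := by
      ext k
      rw [coeff_add, coeff_add, coeff_sum_mono, coeff_sum_mono, coeff_shift_sum]
      simp only [Finset.mem_Icc, Finset.mem_range]
      by_cases h1 : k < M
      · rw [if_neg (by omega), if_pos h1, if_neg (by omega)]; ring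
      · by_cases h2 : k ≤ n
        · rw [if_pos (by omega : M ≤ k ∧ k ≤ n), if_neg h1, if_neg (by omega)]; ring
        · by_cases h3 : k < n + M
          · rw [if_neg (by omega), if_neg h1, if_pos (by omega : n + 1 ≤ k ∧ k < n + 1 + (M - 1))]
            rw [show n + 1 + (k - (n + 1)) = k from by omega]
            ring
          · rw [if_neg (by omega), if_neg h1, if_neg (by omega), hGzero k (by omega)]
            ring
    rw [hGeq] at hgood2
    have hfin := good_count (0 + M + (M - 1)) G hgood2 hGne roots hroots'
    omega
  · -- small case n < M
    have hgoodG := buildLow (n + M) 0 0 (fun j => G.coeff j)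
      (Good.nonneg 0 (by simp)) (by simp)
    have hGeq : (0 : Polynomial ℝ) + ∑ j ∈ Finset.range (n + M),
        C ((fun j => G.coeff j) j) * X ^ j = G := by
      rw [zero_add]
      ext k
      rw [coeff_sum_mono]
      simp only [Finset.mem_range]
      split_ifs with hk
      · rfl
      · rw [hGzero k (by omega)]
    rw [hGeq] at hgoodG
    have hfin := good_count (0 + (n + M)) G hgoodG hGne roots hroots'
    omega
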